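/- arXiv:1804.08945 — 2 statements merged into one kernel-verified Lean document; each statement's English description precedes it below -/
import Mathlib

section
/- Let k_0 : [0,1] → ℝ be nonnegative and integrable, continuous near 1, and suppose there exist r > 1, C_r > 0 and ε > 0 such that |k_0(x) - k_0(1)| ≤ C_r |log x|^r for all x ∈ (1-ε, 1). Then ∫_0^1 k_0(x) x^{s-1} dx = k_0(1)/s + o(s^{-r}) as s → ∞ along the reals. -/
open MeasureTheory Set Filter Asymptotics

lemma aux_bexp {r b : ℝ} (hr : 0 < r) (hb : 0 ≤ b) : b ^ r ≤ r ^ r * Real.exp b := by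
  have h1 : b / r ≤ Real.exp (b / r) := by
    have := Real.add_one_le_exp (b / r); linarith
  have h2 : (b / r) ^ r ≤ (Real.exp (b / r)) ^ r :=
    Real.rpow_le_rpow (by positivity) h1 hr.le
  have h3 : (Real.exp (b / r)) ^ r = Real.exp b := by
    rw [← Real.exp_mul, div_mul_cancel₀ _ hr.ne']
  have h4 : b ^ r = r ^ r * (b / r) ^ r := by
    rw [← Real.mul_rpow hr.le (by positivity), mul_div_cancel₀ _ hr.ne']
  rw [h4]
  exact mul_le_mul_of_nonneg_left (h3 ▸ h2) (by positivity)

lemma aux_key {r : ℝ} (hr : 0 < r) {x u : ℝ} (hx0 : 0 < x) (hx1 : x < 1) (hu : 0 < u) :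
    |Real.log x| ^ r * x ^ u ≤ (r / u) ^ r := by
  set t := -Real.log x with ht
  have hlog : Real.log x < 0 := Real.log_neg hx0 hx1
  have ht0 : 0 ≤ t := by rw [ht]; linarith
  have habs : |Real.log x| = t := abs_of_neg hlog
  have hxu : x ^ u = Real.exp (-(u * t)) := by
    rw [Real.rpow_def_of_pos hx0, ht]; ring_nf
  rw [habs, hxu]
  set b := u * t with hb
  have hb0 : 0 ≤ b := by positivity
  have htb : t = b / u := by rw [hb]; field_simp
  have key : b ^ r ≤ r ^ r * Real.exp b := aux_bexp hr hb0
  have hexp : (0:ℝ) < Real.exp b := Real.exp_pos b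
  calc t ^ r * Real.exp (-b) = b ^ r / u ^ r * (Real.exp b)⁻¹ := by
        rw [htb, Real.div_rpow hb0 hu.le, Real.exp_neg]
    _ ≤ r ^ r * Real.exp b / u ^ r * (Real.exp b)⁻¹ := by gcongr
    _ = r ^ r / u ^ r := by field_simp
    _ = (r / u) ^ r := (Real.div_rpow hr.le hu.le r).symm

lemma aux_J {u : ℝ} (hu : 0 < u) : ∫ x in Set.Ioo (0:ℝ) 1, x ^ (u - 1) = 1 / u := by
  rw [← integral_Ioc_eq_integral_Ioo, ← intervalIntegral.integral_of_le zero_le_one,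
    integral_rpow (Or.inl (by linarith))]
  rw [sub_add_cancel, Real.one_rpow, Real.zero_rpow hu.ne']
  norm_num

lemma aux_Jint {u : ℝ} (hu : 0 < u) :
    IntegrableOn (fun x : ℝ => x ^ (u - 1)) (Set.Ioo 0 1) := by
  have := (intervalIntegral.intervalIntegrable_rpow' (a := 0) (b := 1) (r := u - 1)
    (by linarith))
  exact ((intervalIntegrable_iff_integrableOn_Ioc_of_le zero_le_one).1 this).mono_set
    Ioo_subset_Ioc_self

/-- If `k₀` is nonnegative, integrable on `(0,1)`, continuous on `[1-ε,1]`, and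
satisfies `|k₀(x) - k₀(1)| ≤ C_r |log x|^r` on `(1-ε,1)` with `r > 1`, then
`∫_0^1 k₀(x) x^{s-1} dx = k₀(1)/s + o(s^{-r})` as `s → ∞` along the reals. -/
theorem mellin_expansion_rate
    (k₀ : ℝ → ℝ) (ε r C_r : ℝ) (hε : 0 < ε) (hr : 1 < r) (hC : 0 < C_r)
    (hint : IntegrableOn k₀ (Set.Ioo 0 1))
    (hnonneg : ∀ x ∈ Set.Ioo (0:ℝ) 1, 0 ≤ k₀ x)
    (hcont : ContinuousOn k₀ (Set.Icc (1 - ε) 1))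
    (hholder : ∀ x ∈ Set.Ioo (1 - ε) 1, |k₀ x - k₀ 1| ≤ C_r * |Real.log x| ^ r) :
    (fun s : ℝ => (∫ x in Set.Ioo (0:ℝ) 1, k₀ x * x ^ (s - 1)) - k₀ 1 / s)
      =o[atTop] fun s : ℝ => s ^ (-r) := by
  have hr0 : 0 < r := by linarith
  -- the splitting point
  set a : ℝ := max (1 - ε/2) 2⁻¹ with ha_def
  have ha0 : (0:ℝ) < a := lt_of_lt_of_le (by norm_num) (le_max_right _ _)
  have ha1 : a < 1 := max_lt (by linarith) (by norm_num)
  have haε : 1 - ε < a := lt_of_lt_of_le (by linarith) (le_max_left _ _)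
  have hsub1 : Set.Ioc (0:ℝ) a ⊆ Set.Ioo 0 1 :=
    fun x hx => ⟨hx.1, lt_of_le_of_lt hx.2 ha1⟩
  have hsub2 : Set.Ioo a 1 ⊆ Set.Ioo (0:ℝ) 1 :=
    fun x hx => ⟨ha0.trans hx.1, hx.2⟩
  -- basic integrability
  have hvol : volume (Set.Ioo (0:ℝ) 1) < ⊤ := by simp [Real.volume_Ioo]
  have hconst : IntegrableOn (fun _ : ℝ => k₀ 1) (Set.Ioo 0 1) :=
    integrableOn_const hvol.ne
  have hint' : IntegrableOn (fun x => k₀ x - k₀ 1) (Set.Ioo 0 1) := hint.sub hconst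
  set M : ℝ := ∫ x in Set.Ioo (0:ℝ) 1, |k₀ x - k₀ 1| with hM
  set K : ℝ := 2 * C_r * (2 * r) ^ r with hK
  -- the eventual bound
  have hbound : ∀ᶠ s in atTop,
      ‖(∫ x in Set.Ioo (0:ℝ) 1, k₀ x * x ^ (s - 1)) - k₀ 1 / s‖
        ≤ M * a ^ (s - 1) + K * (s ^ (-r) * s⁻¹) := by
    filter_upwards [eventually_ge_atTop 1] with s hs
    have hs0 : (0:ℝ) < s := by linarith
    have hmeas : ∀ c : ℝ, Measurable fun x : ℝ => x ^ c := fun c => by fun_prop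
    -- integrability of the integrands
    have hFint : IntegrableOn (fun x => (k₀ x - k₀ 1) * x ^ (s - 1)) (Set.Ioo 0 1) := by
      refine Integrable.mono' hint'.abs
        (hint'.aestronglyMeasurable.mul ((hmeas (s-1)).aestronglyMeasurable)) ?_
      rw [ae_restrict_iff' measurableSet_Ioo]
      refine ae_of_all _ fun x hx => ?_
      rw [Real.norm_eq_abs, abs_mul, abs_of_nonneg (Real.rpow_nonneg hx.1.le _)]
      have h1 : x ^ (s - 1) ≤ 1 := Real.rpow_le_one hx.1.le hx.2.le (by linarith)
      nlinarith [abs_nonneg (k₀ x - k₀ 1)]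
    have hkint : IntegrableOn (fun x => k₀ x * x ^ (s - 1)) (Set.Ioo 0 1) := by
      refine Integrable.mono' hint.abs
        (hint.aestronglyMeasurable.mul ((hmeas (s-1)).aestronglyMeasurable)) ?_
      rw [ae_restrict_iff' measurableSet_Ioo]
      refine ae_of_all _ fun x hx => ?_
      rw [Real.norm_eq_abs, abs_mul, abs_of_nonneg (Real.rpow_nonneg hx.1.le _)]
      have h1 : x ^ (s - 1) ≤ 1 := Real.rpow_le_one hx.1.le hx.2.le (by linarith)
      nlinarith [abs_nonneg (k₀ x)]
    have hcint : IntegrableOn (fun x => k₀ 1 * x ^ (s - 1)) (Set.Ioo 0 1) :=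
      (aux_Jint hs0).const_mul _
    -- rewrite the difference as a single integral
    have hsplit : (∫ x in Set.Ioo (0:ℝ) 1, k₀ x * x ^ (s - 1)) - k₀ 1 / s
        = ∫ x in Set.Ioo (0:ℝ) 1, (k₀ x - k₀ 1) * x ^ (s - 1) := by
      have : ∀ x : ℝ, (k₀ x - k₀ 1) * x ^ (s - 1)
          = k₀ x * x ^ (s - 1) - k₀ 1 * x ^ (s - 1) := fun x => by ring
      simp only [this]
      rw [integral_sub hkint hcint, integral_const_mul, aux_J hs0]
      ring
    -- split the domain
    have hunion : Set.Ioc (0:ℝ) a ∪ Set.Ioo a 1 = Set.Ioo 0 1 :=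
      Set.Ioc_union_Ioo_eq_Ioo ha0.le ha1
    have hdisj : Disjoint (Set.Ioc (0:ℝ) a) (Set.Ioo a 1) := by
      rw [Set.disjoint_left]
      rintro x ⟨_, hxa⟩ ⟨hax, _⟩
      exact absurd hxa (not_le.2 hax)
    have hdecomp : ∫ x in Set.Ioo (0:ℝ) 1, (k₀ x - k₀ 1) * x ^ (s - 1)
        = (∫ x in Set.Ioc (0:ℝ) a, (k₀ x - k₀ 1) * x ^ (s - 1))
          + ∫ x in Set.Ioo a 1, (k₀ x - k₀ 1) * x ^ (s - 1) := by
      rw [← hunion, setIntegral_union hdisj measurableSet_Ioo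
        (hFint.mono_set hsub1) (hFint.mono_set hsub2)]
    -- bound on (0, a]
    have hT1 : ‖∫ x in Set.Ioc (0:ℝ) a, (k₀ x - k₀ 1) * x ^ (s - 1)‖ ≤ M * a ^ (s - 1) := by
      refine (norm_integral_le_integral_norm _).trans ?_
      have step : (∫ x in Set.Ioc (0:ℝ) a, ‖(k₀ x - k₀ 1) * x ^ (s - 1)‖)
          ≤ ∫ x in Set.Ioc (0:ℝ) a, |k₀ x - k₀ 1| * a ^ (s - 1) := by
        refine setIntegral_mono_on ((hFint.mono_set hsub1).norm)
          (((hint'.mono_set hsub1).abs).mul_const _) measurableSet_Ioc fun x hx => ?_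
        rw [Real.norm_eq_abs, abs_mul, abs_of_nonneg (Real.rpow_nonneg hx.1.le _)]
        exact mul_le_mul_of_nonneg_left
          (Real.rpow_le_rpow hx.1.le hx.2 (by linarith)) (abs_nonneg _)
      refine step.trans ?_
      rw [integral_mul_const]
      have hMle : (∫ x in Set.Ioc (0:ℝ) a, |k₀ x - k₀ 1|) ≤ M :=
        setIntegral_mono_set hint'.abs (ae_of_all _ fun x => abs_nonneg _)
          (HasSubset.Subset.eventuallyLE hsub1)
      exact mul_le_mul_of_nonneg_right hMle (Real.rpow_nonneg ha0.le _)
    -- bound on (a, 1)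
    have hT2 : ‖∫ x in Set.Ioo a 1, (k₀ x - k₀ 1) * x ^ (s - 1)‖
        ≤ K * (s ^ (-r) * s⁻¹) := by
      refine (norm_integral_le_integral_norm _).trans ?_
      have hs2 : (0:ℝ) < s / 2 := by linarith
      have step : (∫ x in Set.Ioo a 1, ‖(k₀ x - k₀ 1) * x ^ (s - 1)‖)
          ≤ ∫ x in Set.Ioo a 1, (C_r * (2 * r / s) ^ r) * x ^ (s / 2 - 1) := by
        refine setIntegral_mono_on ((hFint.mono_set hsub2).norm)
          (((aux_Jint hs2).mono_set hsub2).const_mul _) measurableSet_Ioo fun x hx => ?_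
        have hx0 : 0 < x := ha0.trans hx.1
        have hx1 : x < 1 := hx.2
        have hxε : x ∈ Set.Ioo (1 - ε) 1 := ⟨haε.trans hx.1, hx.2⟩
        rw [Real.norm_eq_abs, abs_mul, abs_of_nonneg (Real.rpow_nonneg hx0.le _)]
        have h1 : |k₀ x - k₀ 1| * x ^ (s - 1) ≤ (C_r * |Real.log x| ^ r) * x ^ (s - 1) :=
          mul_le_mul_of_nonneg_right (hholder x hxε) (Real.rpow_nonneg hx0.le _)
        refine h1.trans ?_
        have hdecx : x ^ (s - 1) = x ^ (s / 2) * x ^ (s / 2 - 1) := by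
          rw [← Real.rpow_add hx0]; ring_nf
        have hkey : |Real.log x| ^ r * x ^ (s / 2) ≤ (2 * r / s) ^ r := by
          have := aux_key hr0 hx0 hx1 hs2
          have heq : r / (s / 2) = 2 * r / s := by field_simp
          rwa [heq] at this
        calc C_r * |Real.log x| ^ r * x ^ (s - 1)
            = C_r * ((|Real.log x| ^ r * x ^ (s / 2)) * x ^ (s / 2 - 1)) := by
              rw [hdecx]; ring
          _ ≤ C_r * ((2 * r / s) ^ r * x ^ (s / 2 - 1)) := by
              refine mul_le_mul_of_nonneg_left ?_ hC.le
              exact mul_le_mul_of_nonneg_right hkey (Real.rpow_nonneg hx0.le _)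
          _ = (C_r * (2 * r / s) ^ r) * x ^ (s / 2 - 1) := by ring
      refine step.trans ?_
      rw [integral_const_mul]
      have hIle : (∫ x in Set.Ioo a 1, x ^ (s / 2 - 1))
          ≤ ∫ x in Set.Ioo (0:ℝ) 1, x ^ (s / 2 - 1) :=
        setIntegral_mono_set (aux_Jint hs2)
          ((ae_restrict_iff' measurableSet_Ioo).2 (ae_of_all _ fun x hx =>
            Real.rpow_nonneg hx.1.le _))
          (HasSubset.Subset.eventuallyLE hsub2)
      have hJval : (∫ x in Set.Ioo (0:ℝ) 1, x ^ (s / 2 - 1)) = 2 / s := by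
        rw [aux_J hs2]; field_simp
      have h2 : C_r * (2 * r / s) ^ r * (∫ x in Set.Ioo a 1, x ^ (s / 2 - 1))
          ≤ C_r * (2 * r / s) ^ r * (2 / s) := by
        refine mul_le_mul_of_nonneg_left ?_ (by positivity)
        rw [← hJval]; exact hIle
      refine h2.trans (le_of_eq ?_)
      have hrw : (2 * r / s) ^ r = (2 * r) ^ r * s ^ (-r) := by
        rw [Real.div_rpow (by linarith) hs0.le, Real.rpow_neg hs0.le, div_eq_mul_inv]
      rw [hrw, hK]
      field_simp
    rw [hsplit, hdecomp]
    calc ‖(∫ x in Set.Ioc (0:ℝ) a, (k₀ x - k₀ 1) * x ^ (s - 1))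
          + ∫ x in Set.Ioo a 1, (k₀ x - k₀ 1) * x ^ (s - 1)‖
        ≤ ‖∫ x in Set.Ioc (0:ℝ) a, (k₀ x - k₀ 1) * x ^ (s - 1)‖
          + ‖∫ x in Set.Ioo a 1, (k₀ x - k₀ 1) * x ^ (s - 1)‖ := norm_add_le _ _
      _ ≤ M * a ^ (s - 1) + K * (s ^ (-r) * s⁻¹) := add_le_add hT1 hT2
  -- the comparison function is o(s^{-r})
  have hA : (fun s : ℝ => M * a ^ (s - 1)) =o[atTop] fun s : ℝ => s ^ (-r) := by
    set b : ℝ := -Real.log a with hb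
    have hblog : Real.log a < 0 := Real.log_neg ha0 ha1
    have hb0 : 0 < b := by rw [hb]; linarith
    have heq : (fun s : ℝ => M * a ^ (s - 1))
        = fun s : ℝ => (M * Real.exp b) * Real.exp (-b * s) := by
      funext s
      rw [Real.rpow_def_of_pos ha0, show Real.log a * (s - 1) = -b * s + b by rw [hb]; ring,
        Real.exp_add]
      ring
    rw [heq]
    exact (isLittleO_exp_neg_mul_rpow_atTop hb0 (-r)).const_mul_left _
  have hB : (fun s : ℝ => K * (s ^ (-r) * s⁻¹)) =o[atTop] fun s : ℝ => s ^ (-r) := by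
    have base : (fun s : ℝ => s ^ (-r) * s⁻¹) =o[atTop] fun s : ℝ => s ^ (-r) * 1 :=
      (isBigO_refl (fun s : ℝ => s ^ (-r)) atTop).mul_isLittleO
        ((isLittleO_one_iff ℝ).2 tendsto_inv_atTop_zero)
    simpa only [mul_one] using base.const_mul_left K
  have hg : (fun s : ℝ => M * a ^ (s - 1) + K * (s ^ (-r) * s⁻¹))
      =o[atTop] fun s : ℝ => s ^ (-r) := hA.add hB
  refine IsBigO.trans_isLittleO (IsBigO.of_bound 1 ?_) hg
  filter_upwards [hbound] with s hs
  rw [one_mul]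
  exact hs.trans (le_abs_self _)
end

section
/- For all A ∈ (0,1) and all real k ≥ 0, ∫_0^A log|log w| · w^k dw = ( -Ψ((k+1) log A) + A^{k+1} log|log A| ) / (k+1), where Ψ(z) = -P.V. ∫_{-z}^∞ e^{-t}/t dt. -/
open MeasureTheory Set

/-- The exponential-integral type function `Ψ(z) = -∫_{-z}^∞ e^{-t}/t dt`
(no principal value is needed when `-z > 0`). -/
noncomputable def PsiEI (z : ℝ) : ℝ := -∫ t in Set.Ioi (-z), Real.exp (-t) / t

namespace PsiAux

open Filter Real Topology

lemma g_integrableOn {c : ℝ} (hc : 0 < c) :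
    IntegrableOn (fun t => Real.exp (-t) / t) (Set.Ioi c) := by
  have h1 : IntegrableOn (fun t => c⁻¹ * Real.exp (-t)) (Set.Ioi c) := by
    have h0 : IntegrableOn (fun t => Real.exp (-t)) (Set.Ioi c) := by
      simpa using exp_neg_integrableOn_Ioi c one_pos
    exact h0.const_mul c⁻¹
  refine Integrable.mono' h1 ?_ ?_
  · exact ((Real.measurable_exp.comp measurable_neg).div measurable_id).aestronglyMeasurable
  · filter_upwards [ae_restrict_mem measurableSet_Ioi] with t ht
    have htpos : 0 < t := hc.trans ht
    rw [Real.norm_eq_abs, abs_of_nonneg (by positivity), inv_mul_eq_div]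
    gcongr
    exact le_of_lt ht

lemma hasDerivAt_H {x : ℝ} (hx : 0 < x) :
    HasDerivAt (fun y => ∫ t in Set.Ioi y, Real.exp (-t) / t)
      (-(Real.exp (-x) / x)) x := by
  set g : ℝ → ℝ := fun t => Real.exp (-t) / t with hg
  have hc : 0 < x / 2 := by positivity
  have hmemIoi : Set.Ioi (x / 2) ∈ 𝓝 x := Ioi_mem_nhds (by linarith)
  have hcont : ContinuousAt g x := by
    exact ((Real.continuous_exp.comp continuous_neg).continuousAt).div continuousAt_id
      (ne_of_gt hx)
  have hint : IntervalIntegrable g volume (x / 2) x := by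
    rw [intervalIntegrable_iff_integrableOn_Ioc_of_le (by linarith)]
    exact (g_integrableOn hc).mono_set Set.Ioc_subset_Ioi_self
  have hmeas : StronglyMeasurableAtFilter g (𝓝 x) :=
    ⟨Set.univ, univ_mem,
      (((Real.measurable_exp.comp measurable_neg).div measurable_id).aestronglyMeasurable)⟩
  have hFTC : HasDerivAt (fun y => ∫ t in (x / 2)..y, g t) (g x) x :=
    intervalIntegral.integral_hasDerivAt_right hint hmeas hcont
  have hD : HasDerivAt
      (fun y => (∫ t in Set.Ioi (x / 2), g t) - ∫ t in (x / 2)..y, g t) (-(g x)) x := by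
    simpa using (hFTC.const_sub (∫ t in Set.Ioi (x / 2), g t))
  refine hD.congr_of_eventuallyEq ?_
  filter_upwards [hmemIoi] with y hy
  have hy2 : x / 2 ≤ y := le_of_lt hy
  rw [intervalIntegral.integral_of_le hy2]
  have hsplit : (∫ t in Set.Ioc (x / 2) y, g t) + ∫ t in Set.Ioi y, g t
      = ∫ t in Set.Ioi (x / 2), g t := by
    rw [← setIntegral_union (Set.Ioc_disjoint_Ioi le_rfl) measurableSet_Ioi
      ((g_integrableOn hc).mono_set Set.Ioc_subset_Ioi_self)
      ((g_integrableOn hc).mono_set (Set.Ioi_subset_Ioi hy2)),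
      Set.Ioc_union_Ioi_eq_Ioi hy2]
  linarith

lemma H_tendsto :
    Tendsto (fun x => ∫ t in Set.Ioi x, Real.exp (-t) / t) atTop (𝓝 0) := by
  refine tendsto_of_tendsto_of_tendsto_of_le_of_le' tendsto_const_nhds
    Real.tendsto_exp_neg_atTop_nhds_zero ?_ ?_
  · filter_upwards [eventually_ge_atTop (1 : ℝ)] with x hx
    refine setIntegral_nonneg measurableSet_Ioi fun t ht => ?_
    have : (0:ℝ) < t := lt_of_lt_of_le (lt_of_lt_of_le one_pos hx) (le_of_lt ht)
    positivity
  · filter_upwards [eventually_ge_atTop (1 : ℝ)] with x hx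
    have hx0 : (0:ℝ) < x := lt_of_lt_of_le one_pos hx
    have hexp : IntegrableOn (fun t => Real.exp (-t)) (Set.Ioi x) := by
      simpa using exp_neg_integrableOn_Ioi x one_pos
    have hmono := setIntegral_mono_on (g_integrableOn hx0) hexp measurableSet_Ioi
      (fun t ht => by
        have ht1 : (1:ℝ) ≤ t := hx.trans (le_of_lt ht)
        exact div_le_self (Real.exp_pos _).le ht1)
    rwa [integral_exp_neg_Ioi] at hmono

lemma psi_hasDerivAt {z : ℝ} (hz : z < 0) :
    HasDerivAt PsiEI (Real.exp z / z) z := by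
  have h1 := hasDerivAt_H (x := -z) (by linarith)
  have h2 : HasDerivAt (fun z : ℝ => -z) (-1) z := hasDerivAt_neg z
  have h3 := (h1.comp z h2).neg
  have heq : Real.exp z / z = -(-(Real.exp (-(-z)) / (-z)) * (-1)) := by
    rw [neg_neg, div_neg]; ring
  rw [heq]
  exact h3

lemma psi_tendsto : Tendsto PsiEI atBot (𝓝 0) := by
  have h := H_tendsto.comp tendsto_neg_atBot_atTop
  have := h.neg
  rw [show PsiEI = fun x => -∫ t in Ioi (-x), Real.exp (-t) / t from rfl]
  simpa [PsiEI, Function.comp] using this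

end PsiAux

open Filter Topology Real PsiAux

/-- For `A ∈ (0,1)` and real `k ≥ 0`,
`∫_0^A log|log w| w^k dw = (-Ψ((k+1)log A) + A^{k+1} log|log A|)/(k+1)`. -/
theorem integral_loglog_pow_left (A k : ℝ) (hA : A ∈ Set.Ioo (0:ℝ) 1) (hk : 0 ≤ k) :
    ∫ w in Set.Ioo (0:ℝ) A, Real.log |Real.log w| * w ^ k
      = (-PsiEI ((k + 1) * Real.log A) + A ^ (k + 1) * Real.log |Real.log A|)
          / (k + 1) := by
  obtain ⟨hA0, hA1⟩ := hA
  have hκ : (0:ℝ) < k + 1 := by linarith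
  have hlogA : Real.log A < 0 := Real.log_neg hA0 hA1
  set f : ℝ → ℝ := fun w => Real.log (-Real.log w) * w ^ k with hf
  set F : ℝ → ℝ := fun w =>
    (w ^ (k + 1) * Real.log (-Real.log w) - PsiEI ((k + 1) * Real.log w)) / (k + 1) with hF
  -- Derivative of F on (0,1)
  have hFderiv : ∀ w ∈ Set.Ioo (0:ℝ) 1, HasDerivAt F (f w) w := by
    rintro w ⟨hw0, hw1⟩
    have hwne : w ≠ 0 := ne_of_gt hw0
    have hlw : Real.log w < 0 := Real.log_neg hw0 hw1
    have hlwne : Real.log w ≠ 0 := ne_of_lt hlw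
    have hnlw : (0:ℝ) < -Real.log w := by linarith
    have h1 : HasDerivAt (fun w : ℝ => w ^ (k + 1)) ((k + 1) * w ^ k) w := by
      have := Real.hasDerivAt_rpow_const (x := w) (p := k + 1) (Or.inl hwne)
      simpa using this
    have h2 : HasDerivAt (fun w : ℝ => Real.log (-Real.log w))
        ((-Real.log w)⁻¹ * -w⁻¹) w := by
      have hl : HasDerivAt (fun w : ℝ => -Real.log w) (-w⁻¹) w :=
        (Real.hasDerivAt_log hwne).neg
      exact (Real.hasDerivAt_log (ne_of_gt hnlw)).comp w hl
    have hprod := h1.mul h2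
    have hz : (k + 1) * Real.log w < 0 := mul_neg_of_pos_of_neg hκ hlw
    have hinner : HasDerivAt (fun w : ℝ => (k + 1) * Real.log w) ((k + 1) * w⁻¹) w :=
      (Real.hasDerivAt_log hwne).const_mul (k + 1)
    have h3 := (psi_hasDerivAt hz).comp w hinner
    have htot := ((hprod.sub h3).div_const (k + 1))
    have hexp : Real.exp ((k + 1) * Real.log w) = w ^ (k + 1) := by
      rw [Real.rpow_def_of_pos hw0, mul_comm]
    have hsplit : w ^ (k + 1) = w ^ k * w := by
      rw [Real.rpow_add hw0, Real.rpow_one]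
    refine HasDerivAt.congr_deriv htot (Eq.symm ?_)
    show Real.log (-Real.log w) * w ^ k = _
    rw [hexp, hsplit]
    simp only [Real.log_neg_eq_log]
    field_simp
    ring
  -- pointwise rewrite of the integrand
  have habs : ∀ w ∈ Set.Ioo (0:ℝ) A, Real.log |Real.log w| * w ^ k = f w := by
    rintro w ⟨hw0, hwA⟩
    have hlw : Real.log w < 0 := Real.log_neg hw0 (hwA.trans hA1)
    rw [hf]; simp only [abs_of_neg hlw]
  -- Integrability of f on Ioo 0 A
  have hfcont : ContinuousOn f (Set.Ioo (0:ℝ) A) := by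
    intro w hw
    obtain ⟨hw0, hwA⟩ := hw
    have hw1 : w < 1 := hwA.trans hA1
    have hlw : Real.log w < 0 := Real.log_neg hw0 hw1
    have hnlw : (0:ℝ) < -Real.log w := by linarith
    have c1 : ContinuousAt (fun w : ℝ => Real.log (-Real.log w)) w := by
      have hl : HasDerivAt (fun w : ℝ => -Real.log w) (-w⁻¹) w :=
        (Real.hasDerivAt_log (ne_of_gt hw0)).neg
      exact ((Real.hasDerivAt_log (ne_of_gt hnlw)).comp w hl).continuousAt
    have c2 : ContinuousAt (fun w : ℝ => w ^ k) w :=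
      Real.continuousAt_rpow_const w k (Or.inl (ne_of_gt hw0))
    exact (c1.mul c2).continuousWithinAt
  have hInt : IntegrableOn f (Set.Ioo (0:ℝ) A) := by
    set C : ℝ := |Real.log (-Real.log A)| with hC
    have hdom : IntegrableOn (fun w : ℝ => 2 * w ^ (-2⁻¹ : ℝ) + C) (Set.Ioo (0:ℝ) A) := by
      have h1 : IntegrableOn (fun w : ℝ => w ^ (-2⁻¹ : ℝ)) (Set.Ioo (0:ℝ) A) :=
        (intervalIntegral.integrableOn_Ioo_rpow_iff hA0).2 (by norm_num)
      have h2 : IntegrableOn (fun _ : ℝ => C) (Set.Ioo (0:ℝ) A) :=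
        integrableOn_const measure_Ioo_lt_top.ne
      exact (h1.const_mul 2).add h2
    refine Integrable.mono' hdom (hfcont.aestronglyMeasurable measurableSet_Ioo) ?_
    filter_upwards [ae_restrict_mem measurableSet_Ioo] with w hw
    obtain ⟨hw0, hwA⟩ := hw
    have hw1 : w < 1 := hwA.trans hA1
    have hlw : Real.log w < 0 := Real.log_neg hw0 hw1
    have hnlw : (0:ℝ) < -Real.log w := by linarith
    have hnlA : (0:ℝ) < -Real.log A := by linarith
    have hCnn : 0 ≤ C := abs_nonneg _
    have b1 : Real.log (-Real.log w) ≤ -Real.log w := by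
      have := Real.log_le_sub_one_of_pos hnlw
      linarith
    have b2 : Real.log (-Real.log A) ≤ Real.log (-Real.log w) := by
      have hle : Real.log w ≤ Real.log A := Real.log_le_log hw0 hwA.le
      exact Real.log_le_log hnlA (by linarith)
    have b3 : -Real.log w ≤ 2 * w ^ (-2⁻¹ : ℝ) := by
      have hlogr : Real.log (w ^ (-2⁻¹ : ℝ)) = (-2⁻¹ : ℝ) * Real.log w :=
        Real.log_rpow hw0 _
      have hpos : (0:ℝ) < w ^ (-2⁻¹ : ℝ) := Real.rpow_pos_of_pos hw0 _
      have := Real.log_le_sub_one_of_pos hpos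
      rw [hlogr] at this
      linarith
    have b4 : w ^ k ≤ 1 := Real.rpow_le_one hw0.le hw1.le hk
    have habs' : |Real.log (-Real.log w)| ≤ -Real.log w + C := by
      rw [abs_le]
      constructor
      · have : -C ≤ Real.log (-Real.log A) := neg_abs_le _
        linarith
      · linarith
    have hb : ‖f w‖ ≤ (-Real.log w + C) * 1 := by
      rw [hf]
      simp only [norm_mul, Real.norm_eq_abs]
      refine mul_le_mul habs' ?_ (abs_nonneg _) (by linarith [neg_abs_le (Real.log (-Real.log A))]; ) 
      rw [abs_of_nonneg (Real.rpow_nonneg hw0.le k)]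
      exact b4
    calc ‖f w‖ ≤ (-Real.log w + C) * 1 := hb
      _ = -Real.log w + C := mul_one _
      _ ≤ 2 * w ^ (-2⁻¹ : ℝ) + C := by linarith
  -- limit of F at 0⁺
  have hT1 : Tendsto (fun w => w ^ (k + 1) * Real.log (-Real.log w)) (𝓝[>] (0:ℝ)) (𝓝 0) := by
    have haux : Tendsto (fun u : ℝ => u ^ (1:ℝ) * Real.exp (-(k + 1) * u)) atTop (𝓝 0) :=
      tendsto_rpow_mul_exp_neg_mul_atTop_nhds_zero (1:ℝ) (k + 1) hκ
    have hsq : Tendsto (fun u : ℝ => Real.exp (-((k + 1) * u)) * Real.log u) atTop (𝓝 0) := by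
      refine tendsto_of_tendsto_of_tendsto_of_le_of_le' tendsto_const_nhds haux ?_ ?_
      · filter_upwards [eventually_ge_atTop (1:ℝ)] with u hu
        have : 0 ≤ Real.log u := Real.log_nonneg hu
        positivity
      · filter_upwards [eventually_ge_atTop (1:ℝ)] with u hu
        have hu0 : (0:ℝ) < u := lt_of_lt_of_le one_pos hu
        have hlog : Real.log u ≤ u := by
          have := Real.log_le_sub_one_of_pos hu0; linarith
        rw [Real.rpow_one, neg_mul, mul_comm u _]
        exact mul_le_mul_of_nonneg_left hlog (Real.exp_pos _).le
    have hcomp : Tendsto (fun w : ℝ => -Real.log w) (𝓝[>] (0:ℝ)) atTop :=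
      tendsto_neg_atBot_atTop.comp Real.tendsto_log_nhdsGT_zero
    have := hsq.comp hcomp
    refine this.congr' ?_
    filter_upwards [Ioo_mem_nhdsGT_of_mem (⟨le_refl (0:ℝ), one_pos⟩ : (0:ℝ) ∈ Set.Ico (0:ℝ) 1)]
      with w hw
    obtain ⟨hw0, hw1⟩ := hw
    have hexp : Real.exp (-((k + 1) * -Real.log w)) = w ^ (k + 1) := by
      rw [mul_neg, neg_neg, Real.rpow_def_of_pos hw0, mul_comm]
    simp only [Function.comp]
    rw [hexp]
  have hT2 : Tendsto (fun w => PsiEI ((k + 1) * Real.log w)) (𝓝[>] (0:ℝ)) (𝓝 0) := by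
    have hcomp : Tendsto (fun w : ℝ => (k + 1) * Real.log w) (𝓝[>] (0:ℝ)) atBot :=
      (tendsto_const_mul_atBot_of_pos hκ).2 Real.tendsto_log_nhdsGT_zero
    exact psi_tendsto.comp hcomp
  have hF0 : Tendsto F (𝓝[>] (0:ℝ)) (𝓝 0) := by
    have := (hT1.sub hT2).div_const (k + 1)
    simpa [hF] using this
  -- FTC on [ε, A]
  have hFTC : ∀ ε ∈ Set.Ioo (0:ℝ) A, ∫ w in ε..A, f w = F A - F ε := by
    rintro ε ⟨hε0, hεA⟩
    have huIcc : Set.uIcc ε A = Set.Icc ε A := Set.uIcc_of_le hεA.le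
    have hsub : Set.Icc ε A ⊆ Set.Ioo (0:ℝ) 1 := fun w hw =>
      ⟨lt_of_lt_of_le hε0 hw.1, lt_of_le_of_lt hw.2 hA1⟩
    refine intervalIntegral.integral_eq_sub_of_hasDerivAt (fun w hw => ?_) ?_
    · exact hFderiv w (hsub (huIcc ▸ hw))
    · refine (ContinuousOn.intervalIntegrable ?_)
      rw [huIcc]
      intro w hw
      obtain ⟨hw0, hw1⟩ := hsub hw
      have hlw : Real.log w < 0 := Real.log_neg hw0 hw1
      have c1 : ContinuousAt (fun w : ℝ => Real.log (-Real.log w)) w := by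
        have hl : HasDerivAt (fun w : ℝ => -Real.log w) (-w⁻¹) w :=
          (Real.hasDerivAt_log (ne_of_gt hw0)).neg
        exact ((Real.hasDerivAt_log (ne_of_gt (by linarith : (0:ℝ) < -Real.log w))).comp w
          hl).continuousAt
      have c2 : ContinuousAt (fun w : ℝ => w ^ k) w :=
        Real.continuousAt_rpow_const w k (Or.inl (ne_of_gt hw0))
      exact (c1.mul c2).continuousWithinAt
  -- the AECover limit
  have cover : AECover (volume.restrict (Set.Ioo (0:ℝ) A)) (𝓝[>] (0:ℝ))
      (fun ε => Set.Ioi ε) := by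
    constructor
    · filter_upwards [ae_restrict_mem measurableSet_Ioo] with x hx
      have htend : Tendsto (fun ε : ℝ => ε) (𝓝[>] (0:ℝ)) (𝓝 0) :=
        tendsto_id.mono_left nhdsWithin_le_nhds
      have := htend.eventually_lt_const hx.1
      filter_upwards [this] with ε hε
      exact hε
    · exact fun _ => measurableSet_Ioi
  have hlim := cover.integral_tendsto_of_countably_generated hInt
  have hevent : (fun ε => ∫ x in Set.Ioi ε, f x ∂(volume.restrict (Set.Ioo (0:ℝ) A)))
      =ᶠ[𝓝[>] (0:ℝ)] (fun ε => F A - F ε) := by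
    filter_upwards [Ioo_mem_nhdsGT_of_mem (⟨le_refl (0:ℝ), hA0⟩ : (0:ℝ) ∈ Set.Ico (0:ℝ) A)]
      with ε hε
    rw [Measure.restrict_restrict measurableSet_Ioi]
    have hset : Set.Ioi ε ∩ Set.Ioo 0 A = Set.Ioo ε A := by
      ext x
      simp only [Set.mem_inter_iff, Set.mem_Ioi, Set.mem_Ioo]
      constructor
      · rintro ⟨h1, _, h3⟩; exact ⟨h1, h3⟩
      · rintro ⟨h1, h2⟩; exact ⟨h1, hε.1.trans h1, h2⟩
    rw [hset, ← integral_Ioc_eq_integral_Ioo, ← intervalIntegral.integral_of_le hε.2.le]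
    exact hFTC ε hε
  have hlim2 : Tendsto (fun ε => F A - F ε) (𝓝[>] (0:ℝ)) (𝓝 (F A)) := by
    simpa using (tendsto_const_nhds (x := F A) (f := 𝓝[>] (0:ℝ))).sub hF0
  have hkey : (∫ w in Set.Ioo (0:ℝ) A, f w) = F A := by
    have h1 : Tendsto (fun ε => F A - F ε) (𝓝[>] (0:ℝ))
        (𝓝 (∫ x, f x ∂(volume.restrict (Set.Ioo (0:ℝ) A)))) := hlim.congr' hevent
    exact tendsto_nhds_unique h1 hlim2
  calc ∫ w in Set.Ioo (0:ℝ) A, Real.log |Real.log w| * w ^ k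
      = ∫ w in Set.Ioo (0:ℝ) A, f w := by
        refine setIntegral_congr_fun measurableSet_Ioo ?_
        exact fun w hw => habs w hw
    _ = F A := hkey
    _ = (-PsiEI ((k + 1) * Real.log A) + A ^ (k + 1) * Real.log |Real.log A|) / (k + 1) := by
        rw [hF, abs_of_neg hlogA]
        ring
end
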